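/- arXiv:math/0610706 — 2 statements merged into one kernel-verified Lean document; each statement's English description precedes it below -/
import Mathlib

section
/- The harmonic mapping f_D = h_D + conj∘g_D, where h_D(z) = (1/4)·log((1+z)/(1−z)) − (i/4)·log((1+iz)/(1−iz)) and g_D(z) = −(1/4)·log((1+z)/(1−z)) − (i/4)·log((1+iz)/(1−iz)), is injective on 𝔻 and f_D(𝔻) is convex in the direction of the imaginary axis. -/
open Complex Set

noncomputable section

/-- The open unit disk in the complex plane. -/
def 𝔻 : Set ℂ := {z : ℂ | ‖z‖ < 1}

/-- A set `Ω ⊆ ℂ` is convex in the direction of the imaginary axis if for every `a ∈ ℂ` the set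
`{t ∈ ℝ : a + t·i ∈ Ω}` is an interval (order-connected). -/
def ConvexImDir (Ω : Set ℂ) : Prop :=
  ∀ a : ℂ, ({t : ℝ | a + (t : ℂ) * Complex.I ∈ Ω}).OrdConnected

/-- Analytic part `h_D` of the harmonic Scherk doubly-periodic mapping. -/
def hD : ℂ → ℂ := fun z =>
  (1 / 4) * Complex.log ((1 + z) / (1 - z)) -
    (Complex.I / 4) * Complex.log ((1 + Complex.I * z) / (1 - Complex.I * z))

/-- Co-analytic part `g_D` of the harmonic Scherk doubly-periodic mapping. -/
def gD : ℂ → ℂ := fun z =>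
  -((1 / 4) * Complex.log ((1 + z) / (1 - z))) -
    (Complex.I / 4) * Complex.log ((1 + Complex.I * z) / (1 - Complex.I * z))

/-- Analytic part `h_C` of the harmonic catenoid mapping. -/
def hC : ℂ → ℂ := fun z =>
  (1 / 4) * Complex.log ((1 + z) / (1 - z)) + (1 / 2) * (z / (1 - z ^ 2))

/-- Co-analytic part `g_C` of the harmonic catenoid mapping. -/
def gC : ℂ → ℂ := fun z =>
  (1 / 4) * Complex.log ((1 + z) / (1 - z)) - (1 / 2) * (z / (1 - z ^ 2))

/-- The harmonic Scherk doubly-periodic mapping `f_D = h_D + conj ∘ g_D`. -/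
def fD : ℂ → ℂ := fun z => hD z + (starRingEnd ℂ) (gD z)

lemma arg_eq_arctan' {w : ℂ} (hw : 0 < w.re) : w.arg = Real.arctan (w.im / w.re) :=
  (Real.arctan_eq_of_tan_eq (Complex.tan_arg w)
    (abs_lt.1 (Complex.abs_arg_lt_pi_div_two_iff.2 (Or.inl hw)))).symm

lemma memD {z : ℂ} (hz : ‖z‖ < 1) : z.re^2 + z.im^2 < 1 := by
  have := Complex.sq_norm z
  rw [Complex.normSq_apply] at this
  nlinarith [norm_nonneg z]

lemma argA {z : ℂ} (hz : ‖z‖ < 1) :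
    ((1 + z) / (1 - z)).arg = Real.arctan (2 * z.im / (1 - z.re^2 - z.im^2)) := by
  have hs : 0 < 1 - z.re^2 - z.im^2 := by nlinarith [memD hz]
  have hne : (1 : ℂ) - z ≠ 0 := by
    intro h
    have : z = 1 := by linear_combination -h
    simp [this] at hz
  have hnsq : 0 < Complex.normSq (1 - z) := Complex.normSq_pos.2 hne
  have hre : ((1 + z) / (1 - z)).re = (1 - z.re^2 - z.im^2) / Complex.normSq (1 - z) := by
    rw [Complex.div_re]
    simp [Complex.normSq_apply]
    ring
  have him : ((1 + z) / (1 - z)).im = (2 * z.im) / Complex.normSq (1 - z) := by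
    rw [Complex.div_im]
    simp [Complex.normSq_apply]
    ring
  rw [arg_eq_arctan' (by rw [hre]; positivity), hre, him]
  congr 1
  field_simp

lemma argB {z : ℂ} (hz : ‖z‖ < 1) :
    ((1 + Complex.I * z) / (1 - Complex.I * z)).arg =
      Real.arctan (2 * z.re / (1 - z.re^2 - z.im^2)) := by
  have h : ‖Complex.I * z‖ < 1 := by simpa using hz
  have := argA h
  simp only [Complex.mul_re, Complex.mul_im, Complex.I_re, Complex.I_im] at this
  rw [this]
  ring_nf

lemma fD_eq {z : ℂ} (hz : ‖z‖ < 1) :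
    fD z = ((Real.arctan (2 * z.re / (1 - z.re^2 - z.im^2)) / 2 : ℝ) : ℂ) +
      ((Real.arctan (2 * z.im / (1 - z.re^2 - z.im^2)) / 2 : ℝ) : ℂ) * Complex.I := by
  have hA : (Complex.log ((1 + z) / (1 - z))).im
      = Real.arctan (2 * z.im / (1 - z.re^2 - z.im^2)) := by
    rw [Complex.log_im, argA hz]
  have hB : (Complex.log ((1 + Complex.I * z) / (1 - Complex.I * z))).im
      = Real.arctan (2 * z.re / (1 - z.re^2 - z.im^2)) := by
    rw [Complex.log_im, argB hz]
  apply Complex.ext <;>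
    simp [fD, hD, gD, Complex.add_re, Complex.sub_re, Complex.add_im, Complex.sub_im,
      Complex.mul_re, Complex.mul_im, Complex.div_re, Complex.div_im, hA, hB, -Complex.ofReal_arctan] <;> ring

lemma sqrt_stuff (u v : ℝ) : 1 ≤ Real.sqrt (1 + u^2 + v^2) := by
  nlinarith [Real.sq_sqrt (show (0:ℝ) ≤ 1 + u^2 + v^2 by positivity),
    Real.sqrt_nonneg (1 + u^2 + v^2)]

set_option maxHeartbeats 1000000 in
theorem stmt12_aux : Set.InjOn fD 𝔻 ∧ ConvexImDir (fD '' 𝔻) := by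
  simp only [𝔻, ConvexImDir]
  have himg : fD '' {z : ℂ | ‖z‖ < 1} =
      {w : ℂ | -(Real.pi/4) < w.re ∧ w.re < Real.pi/4 ∧ -(Real.pi/4) < w.im ∧ w.im < Real.pi/4} := by
    apply Set.Subset.antisymm
    · rintro w ⟨z, hz, rfl⟩
      rw [fD_eq hz]
      have h1 := Real.arctan_lt_pi_div_two (2 * z.re / (1 - z.re^2 - z.im^2))
      have h2 := Real.neg_pi_div_two_lt_arctan (2 * z.re / (1 - z.re^2 - z.im^2))
      have h3 := Real.arctan_lt_pi_div_two (2 * z.im / (1 - z.re^2 - z.im^2))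
      have h4 := Real.neg_pi_div_two_lt_arctan (2 * z.im / (1 - z.re^2 - z.im^2))
      simp only [Set.mem_setOf_eq, Complex.add_re, Complex.add_im, Complex.mul_re,
        Complex.mul_im, Complex.I_re, Complex.I_im, Complex.ofReal_re, Complex.ofReal_im,
        -Complex.ofReal_arctan]
      norm_num
      exact ⟨by linarith, by linarith, by linarith, by linarith⟩
    · rintro w ⟨hw1, hw2, hw3, hw4⟩
      set p := w.re with hp
      set q := w.im with hq
      set u := Real.tan (2 * p) with hu
      set v := Real.tan (2 * q) with hv
      set d := Real.sqrt (1 + u^2 + v^2) with hd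
      have hd1 : 1 ≤ d := sqrt_stuff u v
      have hd2 : d^2 = 1 + u^2 + v^2 := Real.sq_sqrt (by positivity)
      have hden : (0:ℝ) < 1 + d := by linarith
      set z : ℂ := ⟨u/(1+d), v/(1+d)⟩ with hzdef
      have hzre : z.re = u/(1+d) := rfl
      have hzim : z.im = v/(1+d) := rfl
      have habs2 : ‖z‖ ^ 2 < 1 := by
        rw [Complex.sq_norm, Complex.normSq_apply, hzre, hzim]
        rw [div_mul_div_comm, div_mul_div_comm, ← add_div,
          div_lt_one (by positivity)]
        nlinarith
      have hzD : ‖z‖ < 1 := by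
        nlinarith [norm_nonneg z]
      have hs : 1 - z.re^2 - z.im^2 = 2/(1+d) := by
        rw [hzre, hzim]
        field_simp
        linear_combination hd2
      have hru : 2 * z.re / (1 - z.re^2 - z.im^2) = u := by
        rw [hs, hzre]; field_simp
      have hrv : 2 * z.im / (1 - z.re^2 - z.im^2) = v := by
        rw [hs, hzim]; field_simp
      refine ⟨z, hzD, ?_⟩
      rw [fD_eq hzD, hru, hrv, hu, hv,
        Real.arctan_tan (x := 2 * p) (by linarith) (by linarith),
        Real.arctan_tan (x := 2 * q) (by linarith) (by linarith)]
      rw [show (2 * p / 2 : ℝ) = p by ring, show (2 * q / 2 : ℝ) = q by ring]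
      exact Complex.re_add_im w
  constructor
  · intro z₁ h₁ z₂ h₂ heq
    simp only [Set.mem_setOf_eq] at h₁ h₂
    rw [fD_eq h₁, fD_eq h₂] at heq
    rw [Complex.ext_iff] at heq
    simp only [Complex.add_re, Complex.add_im, Complex.mul_re, Complex.mul_im,
      Complex.I_re, Complex.I_im, Complex.ofReal_re, Complex.ofReal_im,
      -Complex.ofReal_arctan] at heq
    norm_num at heq
    obtain ⟨hre, him⟩ := heq
    have e1 := Real.arctan_injective (congrArg Real.arctan hre)
    have e2 := Real.arctan_injective (congrArg Real.arctan him)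
    set a := z₁.re; set b := z₁.im; set c := z₂.re; set e := z₂.im
    have hs1 : (0:ℝ) < 1 - a^2 - b^2 := by nlinarith [memD h₁]
    have hs2 : (0:ℝ) < 1 - c^2 - e^2 := by nlinarith [memD h₂]
    rw [div_eq_div_iff (by linarith) (by linarith)] at e1 e2
    have h0 : ((1 - c^2 - e^2) - (1 - a^2 - b^2)) *
        ((1 - c^2 - e^2) + (1 - a^2 - b^2) - (1 - a^2 - b^2) * (1 - c^2 - e^2)) = 0 := by
      linear_combination ((a*(1-c^2-e^2)+c*(1-a^2-b^2))/2) * e1 +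
        ((b*(1-c^2-e^2)+e*(1-a^2-b^2))/2) * e2
    have hpos : (0:ℝ) < (1 - c^2 - e^2) + (1 - a^2 - b^2) -
        (1 - a^2 - b^2) * (1 - c^2 - e^2) := by
      nlinarith [sq_nonneg a, sq_nonneg b, sq_nonneg c, sq_nonneg e]
    have hseq : (1 - a^2 - b^2) = (1 - c^2 - e^2) := by
      rcases mul_eq_zero.1 h0 with h | h
      · linarith
      · linarith
    have hac : a = c := by
      rw [hseq] at e1
      have := mul_right_cancel₀ (by linarith : (1 - c^2 - e^2) ≠ 0) e1
      linarith
    have hbe : b = e := by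
      rw [hseq] at e2
      have := mul_right_cancel₀ (by linarith : (1 - c^2 - e^2) ≠ 0) e2
      linarith
    exact Complex.ext hac hbe
  · intro a₀
    rw [himg]
    refine ⟨fun t₁ h₁ t₂ h₂ t ht => ?_⟩
    simp only [Set.mem_setOf_eq, Complex.add_re, Complex.add_im, Complex.mul_re,
      Complex.mul_im, Complex.I_re, Complex.I_im, Complex.ofReal_re,
      Complex.ofReal_im] at h₁ h₂ ⊢
    obtain ⟨ht1, ht2⟩ := ht
    norm_num at h₁ h₂ ⊢
    exact ⟨by linarith [h₁.1], by linarith [h₁.2.1], by linarith [h₁.2.2.1, h₂.2.2.1],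
      by linarith [h₁.2.2.2, h₂.2.2.2]⟩


/-- The harmonic Scherk doubly-periodic mapping is injective on `𝔻` and its image is convex in
the direction of the imaginary axis. -/
theorem stmt12 : Set.InjOn fD 𝔻 ∧ ConvexImDir (fD '' 𝔻) := by
  exact stmt12_aux
end
end

section
/- The harmonic catenoid mapping f_C = h_C + conj∘g_C, where h_C(z) = (1/4)·log((1+z)/(1−z)) + (1/2)·z/(1−z²) and g_C(z) = (1/4)·log((1+z)/(1−z)) − (1/2)·z/(1−z²), is injective on 𝔻 and f_C(𝔻) is convex in the direction of the imaginary axis. -/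
open Complex Set

noncomputable section

/-- The harmonic catenoid mapping `f_C = h_C + conj ∘ g_C`. -/
def fC : ℂ → ℂ := fun z => hC z + (starRingEnd ℂ) (gC z)

/-! ### Auxiliary machinery -/

/-- The strip map `z ↦ artanh z`. -/
def Tm (z : ℂ) : ℂ := (1 / 2) * Complex.log ((1 + z) / (1 - z))

lemma sinhIm (u : ℂ) : (Complex.sinh u).im = Real.cosh u.re * Real.sin u.im := by
  have h2 : Complex.sinh u = (Complex.exp u - Complex.exp (-u)) / 2 := by
    rw [← Complex.two_sinh]; ring
  rw [h2]
  simp [Complex.exp_im, Complex.exp_re, Real.cosh_eq, Complex.div_im, Complex.normSq_apply]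
  ring

lemma one_sub_ne {z : ℂ} (hz : ‖z‖ < 1) : (1 : ℂ) - z ≠ 0 := by
  intro h
  have : z = 1 := by linear_combination -h
  simp [this] at hz

lemma one_add_ne {z : ℂ} (hz : ‖z‖ < 1) : (1 : ℂ) + z ≠ 0 := by
  intro h
  have : z = -1 := by linear_combination h
  simp [this] at hz

lemma normSq_lt_one {z : ℂ} (hz : ‖z‖ < 1) : Complex.normSq z < 1 := by
  rw [← Complex.sq_norm]
  nlinarith [norm_nonneg z]

lemma re_w_pos {z : ℂ} (hz : ‖z‖ < 1) : 0 < ((1 + z) / (1 - z)).re := by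
  have h0 : 0 < Complex.normSq (1 - z) := Complex.normSq_pos.2 (one_sub_ne hz)
  have hn : Complex.normSq z < 1 := normSq_lt_one hz
  rw [Complex.div_re, ← add_div]
  apply div_pos _ h0
  have : (1 + z).re * (1 - z).re + (1 + z).im * (1 - z).im = 1 - Complex.normSq z := by
    simp [Complex.normSq_apply]; ring
  rw [this]; linarith

lemma w_ne_zero {z : ℂ} (hz : ‖z‖ < 1) : (1 + z) / (1 - z) ≠ 0 :=
  div_ne_zero (one_add_ne hz) (one_sub_ne hz)

lemma exp_two_T {z : ℂ} (hz : ‖z‖ < 1) :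
    Complex.exp (2 * Tm z) = (1 + z) / (1 - z) := by
  have : 2 * Tm z = Complex.log ((1 + z) / (1 - z)) := by unfold Tm; ring
  rw [this, Complex.exp_log (w_ne_zero hz)]

lemma im_T_eq (z : ℂ) : (Tm z).im = (Complex.log ((1 + z) / (1 - z))).im / 2 := by
  unfold Tm
  simp [Complex.mul_im]
  ring

lemma abs_im_T {z : ℂ} (hz : ‖z‖ < 1) : |(Tm z).im| < Real.pi / 4 := by
  rw [im_T_eq, Complex.log_im]
  have h : |Complex.arg ((1 + z) / (1 - z))| < Real.pi / 2 := by
    rw [Complex.abs_arg_lt_pi_div_two_iff]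
    exact Or.inl (re_w_pos hz)
  rw [abs_div]
  have h2 : |(2:ℝ)| = 2 := by norm_num
  rw [h2]
  linarith

lemma sinh_two_T {z : ℂ} (hz : ‖z‖ < 1) :
    Complex.sinh (2 * Tm z) = 2 * (z / (1 - z ^ 2)) := by
  have he : Complex.exp (2 * Tm z) = (1 + z) / (1 - z) := exp_two_T hz
  have he' : Complex.exp (-(2 * Tm z)) = (1 - z) / (1 + z) := by
    rw [Complex.exp_neg, he, inv_div]
  have h2 : Complex.sinh (2 * Tm z)
      = ((1 + z) / (1 - z) - (1 - z) / (1 + z)) / 2 := by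
    rw [← he, ← he', ← Complex.two_sinh]; ring
  rw [h2]
  have h1 : (1 : ℂ) - z ≠ 0 := one_sub_ne hz
  have h3 : (1 : ℂ) + z ≠ 0 := one_add_ne hz
  have h4 : (1 : ℂ) - z ^ 2 ≠ 0 := by
    have : (1 : ℂ) - z ^ 2 = (1 - z) * (1 + z) := by ring
    rw [this]; exact mul_ne_zero h1 h3
  field_simp
  ring

lemma fC_decomp {z : ℂ} (hz : ‖z‖ < 1) :
    fC z = ((1 / 2) * Tm z + (1 / 4) * Complex.sinh (2 * Tm z)) +
      (starRingEnd ℂ) ((1 / 2) * Tm z - (1 / 4) * Complex.sinh (2 * Tm z)) := by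
  have hs := sinh_two_T hz
  unfold fC hC gC Tm
  unfold Tm at hs
  rw [hs]
  ring_nf

lemma fC_re {z : ℂ} (hz : ‖z‖ < 1) : (fC z).re = (Tm z).re := by
  rw [fC_decomp hz]
  simp [Complex.add_re, Complex.sub_re, Complex.mul_re]
  ring

lemma fC_im {z : ℂ} (hz : ‖z‖ < 1) :
    (fC z).im = Real.cosh (2 * (Tm z).re) * Real.sin (2 * (Tm z).im) / 2 := by
  rw [fC_decomp hz]
  have h := sinhIm (2 * Tm z)
  simp only [Complex.add_im, Complex.conj_im, Complex.sub_im, Complex.mul_im]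
  have h2re : (2 * Tm z).re = 2 * (Tm z).re := by simp
  have h2im : (2 * Tm z).im = 2 * (Tm z).im := by simp
  rw [h2re, h2im] at h
  simp [h]
  ring

lemma T_injOn : Set.InjOn Tm 𝔻 := by
  intro z₁ h₁ z₂ h₂ h
  have he : (1 + z₁) / (1 - z₁) = (1 + z₂) / (1 - z₂) := by
    rw [← exp_two_T h₁, ← exp_two_T h₂, h]
  rw [div_eq_div_iff (one_sub_ne h₁) (one_sub_ne h₂)] at he
  have : 2 * z₁ = 2 * z₂ := by linear_combination he
  have h2 : (2 : ℂ) ≠ 0 := two_ne_zero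
  exact mul_left_cancel₀ h2 this

lemma T_surj {ζ : ℂ} (hζ : |ζ.im| < Real.pi / 4) : ∃ z ∈ 𝔻, Tm z = ζ := by
  have hpi := Real.pi_pos
  rw [abs_lt] at hζ
  set e := Complex.exp (2 * ζ) with he_def
  have hre : 0 < e.re := by
    rw [he_def, Complex.exp_re]
    apply mul_pos (Real.exp_pos _)
    apply Real.cos_pos_of_mem_Ioo
    constructor <;> · simp [Complex.mul_im]; nlinarith [hζ.1, hζ.2]
  have he1 : e + 1 ≠ 0 := by
    intro h
    have : (e + 1).re = 0 := by rw [h]; simp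
    simp [Complex.add_re] at this
    linarith
  refine ⟨(e - 1) / (e + 1), ?_, ?_⟩
  · show ‖_‖ < 1
    rw [norm_div, div_lt_one (norm_pos_iff.mpr he1)]
    have hsq : ‖e - 1‖ ^ 2 < ‖e + 1‖ ^ 2 := by
      rw [Complex.sq_norm, Complex.sq_norm, Complex.normSq_apply, Complex.normSq_apply]
      simp only [Complex.sub_re, Complex.sub_im, Complex.add_re, Complex.add_im,
        Complex.one_re, Complex.one_im]
      nlinarith
    nlinarith [norm_nonneg (e - 1), norm_nonneg (e + 1)]
  · have h1 : (1 : ℂ) + (e - 1) / (e + 1) = 2 * e / (e + 1) := by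
      field_simp; ring
    have h2 : (1 : ℂ) - (e - 1) / (e + 1) = 2 / (e + 1) := by
      field_simp; ring
    have he0 : e ≠ 0 := Complex.exp_ne_zero _
    have hw : (1 + (e - 1) / (e + 1)) / (1 - (e - 1) / (e + 1)) = e := by
      rw [h1, h2]
      field_simp
    unfold Tm
    rw [hw, he_def, Complex.log_exp]
    · ring
    · simp [Complex.mul_im]; nlinarith [hζ.1]
    · simp [Complex.mul_im]; nlinarith [hζ.2]

lemma abs_sin_lt_one {t : ℝ} (h : |t| < Real.pi / 2) : |Real.sin t| < 1 := by
  have hpi := Real.pi_pos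
  rw [abs_lt] at h ⊢
  have hmem : t ∈ Set.Icc (-(Real.pi / 2)) (Real.pi / 2) := ⟨by linarith, by linarith⟩
  constructor
  · have := Real.strictMonoOn_sin (a := -(Real.pi / 2)) (b := t)
      ⟨le_refl _, by linarith⟩ hmem h.1
    rw [Real.sin_neg, Real.sin_pi_div_two] at this
    linarith
  · have := Real.strictMonoOn_sin (a := t) (b := Real.pi / 2)
      hmem ⟨by linarith, le_refl _⟩ h.2
    rw [Real.sin_pi_div_two] at this
    linarith

/-- The image of the catenoid map. -/
lemma fC_image : fC '' 𝔻 = {w : ℂ | |w.im| * 2 < Real.cosh (2 * w.re)} := by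
  ext w
  constructor
  · rintro ⟨z, hz, rfl⟩
    have hz' : ‖z‖ < 1 := hz
    have hrw := fC_re hz'
    have him := fC_im hz'
    have hy : |(Tm z).im| < Real.pi / 4 := abs_im_T hz'
    have hsin : |Real.sin (2 * (Tm z).im)| < 1 := by
      apply abs_sin_lt_one
      rw [abs_lt] at hy ⊢
      constructor <;> [nlinarith [hy.1]; nlinarith [hy.2]]
    show |(fC z).im| * 2 < Real.cosh (2 * (fC z).re)
    rw [hrw, him]
    have hc : 0 < Real.cosh (2 * (Tm z).re) := Real.cosh_pos _
    rw [abs_div, abs_mul, abs_of_pos hc]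
    rw [abs_of_pos (by norm_num : (0:ℝ) < 2)]
    rw [div_mul_cancel₀ _ (by norm_num : (2:ℝ) ≠ 0)]
    nlinarith
  · intro hw
    have hw' : |w.im| * 2 < Real.cosh (2 * w.re) := hw
    have hc : 0 < Real.cosh (2 * w.re) := Real.cosh_pos _
    set s : ℝ := 2 * w.im / Real.cosh (2 * w.re) with hs_def
    have hs : |s| < 1 := by
      rw [hs_def, abs_div, abs_of_pos hc, div_lt_one hc]
      rw [abs_mul, abs_of_pos (by norm_num : (0:ℝ) < 2)] at *
      linarith
    rw [abs_lt] at hs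
    set y : ℝ := Real.arcsin s / 2 with hy_def
    have hy : |y| < Real.pi / 4 := by
      have h1 : Real.arcsin s < Real.pi / 2 := by
        rw [Real.arcsin_lt_pi_div_two]; exact hs.2
      have h2 : -(Real.pi / 2) < Real.arcsin s := by
        rw [Real.neg_pi_div_two_lt_arcsin]; exact hs.1
      rw [hy_def, abs_lt]
      constructor <;> [linarith; linarith]
    set ζ : ℂ := (w.re : ℂ) + (y : ℂ) * Complex.I with hζ_def
    have hζre : ζ.re = w.re := by simp [hζ_def]
    have hζim : ζ.im = y := by simp [hζ_def]
    obtain ⟨z, hz, hT⟩ := T_surj (ζ := ζ) (by rw [hζim]; exact hy)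
    refine ⟨z, hz, ?_⟩
    have hz' : ‖z‖ < 1 := hz
    apply Complex.ext
    · rw [fC_re hz', hT, hζre]
    · rw [fC_im hz', hT, hζre, hζim, hy_def]
      rw [mul_div_cancel₀ _ (by norm_num : (2:ℝ) ≠ 0)]
      rw [Real.sin_arcsin (by linarith [hs.1]) (by linarith [hs.2])]
      rw [hs_def]
      field_simp

theorem fC_injOn : Set.InjOn fC 𝔻 := by
  intro z₁ h₁ z₂ h₂ h
  have h₁' : ‖z₁‖ < 1 := h₁
  have h₂' : ‖z₂‖ < 1 := h₂
  have hre : (Tm z₁).re = (Tm z₂).re := by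
    rw [← fC_re h₁', ← fC_re h₂', h]
  have him0 : Real.cosh (2 * (Tm z₁).re) * Real.sin (2 * (Tm z₁).im) / 2
      = Real.cosh (2 * (Tm z₂).re) * Real.sin (2 * (Tm z₂).im) / 2 := by
    rw [← fC_im h₁', ← fC_im h₂', h]
  rw [hre] at him0
  have hc : (0:ℝ) < Real.cosh (2 * (Tm z₂).re) := Real.cosh_pos _
  have hsin : Real.sin (2 * (Tm z₁).im) = Real.sin (2 * (Tm z₂).im) := by
    have := him0
    exact mul_left_cancel₀ hc.ne' (by linarith [this] : Real.cosh (2 * (Tm z₂).re) * Real.sin (2 * (Tm z₁).im) = Real.cosh (2 * (Tm z₂).re) * Real.sin (2 * (Tm z₂).im))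
  have hy₁ := abs_im_T h₁'
  have hy₂ := abs_im_T h₂'
  rw [abs_lt] at hy₁ hy₂
  have hpi := Real.pi_pos
  have him : (Tm z₁).im = (Tm z₂).im := by
    have : 2 * (Tm z₁).im = 2 * (Tm z₂).im :=
      Real.injOn_sin ⟨by linarith, by linarith⟩ ⟨by linarith, by linarith⟩ hsin
    linarith
  have hT : Tm z₁ = Tm z₂ := Complex.ext hre him
  exact T_injOn h₁ h₂ hT

/-- The harmonic catenoid mapping is injective on `𝔻` and its image is convex in the direction
of the imaginary axis. -/
theorem stmt13 : Set.InjOn fC 𝔻 ∧ ConvexImDir (fC '' 𝔻) := by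
  refine ⟨fC_injOn, ?_⟩
  intro a
  rw [fC_image]
  constructor
  intro t₁ h₁ t₂ h₂ t ht
  simp only [Set.mem_setOf_eq, Complex.add_im, Complex.add_re, Complex.mul_im, Complex.mul_re,
    Complex.I_re, Complex.I_im, Complex.ofReal_re, Complex.ofReal_im] at h₁ h₂ ⊢
  ring_nf at h₁ h₂ ⊢
  obtain ⟨ht₁, ht₂⟩ := ht
  set c := Real.cosh (a.re * 2) with hc_def
  have h₁' := abs_lt.1 (show |a.im + t₁| < c / 2 by linarith)
  have h₂' := abs_lt.1 (show |a.im + t₂| < c / 2 by linarith)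
  have : |a.im + t| < c / 2 := abs_lt.2 ⟨by linarith [h₁'.1], by linarith [h₂'.2]⟩
  linarith
end
end
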